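/- Let (W,d) be a closed Hilbert complex with Poincaré inequality: there exists c_P > 0 such that ‖v‖ ≤ c_P ‖d^k v‖ for all v in the orthogonal complement of ker(d^k) within the domain of d^k. Then the dual complex satisfies the same Poincaré inequality with the same constant: for all v in the orthogonal complement of ker(d*_{k+1}) within the domain of d*_{k+1}, one has ‖v‖ ≤ c_P ‖d*_{k+1} v‖. -/

import Mathlib

open scoped RealInnerProductSpace

/-- Poincaré inequality for a closed Hilbert complex transfers to the dual complex
with the same constant. -/
theorem dual_poincare {W W' : Type*}
    [NormedAddCommGroup W] [InnerProductSpace ℝ W] [CompleteSpace W]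
    [NormedAddCommGroup W'] [InnerProductSpace ℝ W'] [CompleteSpace W']
    (d : W →L[ℝ] W') (cP : ℝ) (hcP : 0 < cP)
    (hclosed : IsClosed (LinearMap.range (d : W →ₗ[ℝ] W') : Set W'))
    (hPoincare : ∀ v ∈ (LinearMap.ker (d : W →ₗ[ℝ] W'))ᗮ, ‖v‖ ≤ cP * ‖d v‖) :
    ∀ v ∈ (LinearMap.ker (ContinuousLinearMap.adjoint d : W' →ₗ[ℝ] W))ᗮ,
      ‖v‖ ≤ cP * ‖ContinuousLinearMap.adjoint d v‖ := by
  intro v hv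
  -- ker(d†) = (range d)ᗮ
  have hker : LinearMap.ker (ContinuousLinearMap.adjoint d : W' →ₗ[ℝ] W)
      = (LinearMap.range (d : W →ₗ[ℝ] W'))ᗮ := by
    ext x
    simp only [LinearMap.mem_ker, Submodule.mem_orthogonal]
    constructor
    · intro hx u hu
      obtain ⟨w, rfl⟩ := hu
      have := ContinuousLinearMap.adjoint_inner_right d w x
      rw [show (ContinuousLinearMap.adjoint d) x = 0 from hx] at this
      simpa using this.symm
    · intro h
      have : ∀ w : W, ⟪w, ContinuousLinearMap.adjoint d x⟫ = 0 := by
        intro w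
        rw [ContinuousLinearMap.adjoint_inner_right]
        exact h _ ⟨w, rfl⟩
      exact inner_self_eq_zero.mp (this _)
  have hrange : (LinearMap.range (d : W →ₗ[ℝ] W')) = LinearMap.range (d : W →ₗ[ℝ] W') := rfl
  have hv' : v ∈ LinearMap.range (d : W →ₗ[ℝ] W') := by
    have := hv
    rw [hker, Submodule.orthogonal_orthogonal_eq_closure] at this
    rw [hrange] at this
    rwa [IsClosed.submodule_topologicalClosure_eq hclosed] at this
  obtain ⟨u, hu⟩ := hv'
  -- decompose u
  obtain ⟨u₁, hu₁, u₂, hu₂, rfl⟩ :=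
    Submodule.exists_add_mem_mem_orthogonal (K := (LinearMap.ker (d : W →ₗ[ℝ] W') : Submodule ℝ W)) u
  have hdu : d u₂ = v := by
    have : d u₁ = 0 := hu₁
    simpa [this] using hu
  have key : ‖v‖ ^ 2 ≤ cP * ‖ContinuousLinearMap.adjoint d v‖ * ‖v‖ := by
    have : ⟪v, v⟫ = ⟪u₂, ContinuousLinearMap.adjoint d v⟫ := by
      rw [ContinuousLinearMap.adjoint_inner_right, hdu]
    calc ‖v‖ ^ 2 = ⟪v, v⟫ := by rw [real_inner_self_eq_norm_sq]
    _ = ⟪u₂, ContinuousLinearMap.adjoint d v⟫ := this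
    _ ≤ ‖u₂‖ * ‖ContinuousLinearMap.adjoint d v‖ := real_inner_le_norm _ _
    _ ≤ (cP * ‖d u₂‖) * ‖ContinuousLinearMap.adjoint d v‖ := by
        apply mul_le_mul_of_nonneg_right (hPoincare u₂ hu₂) (norm_nonneg _)
    _ = cP * ‖ContinuousLinearMap.adjoint d v‖ * ‖v‖ := by rw [hdu]; ring
  rcases eq_or_ne v 0 with rfl | hv0
  · simp [mul_nonneg hcP.le (norm_nonneg _)]
  · have hvpos : 0 < ‖v‖ := norm_pos_iff.mpr hv0
    nlinarith [key, hvpos]
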